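/- arXiv:0904.0837 — 2 statements merged into one kernel-verified Lean document; each statement's English description precedes it below -/
import Mathlib

section
/- Let k ≥ 1, and let a : Fin k → ℤ with a i ≠ 0 for all i, A = ∏ a i, σ i = ∏_{j ≠ i} a j. Let n ≤ k, b : Fin k → ℤ with ∑ b i σ i = 1, δ i = ∑_{j ≠ i} b j ∏_{l ≠ i,j} a l, and integers u i, v i for i < n with a i * u i - σ i * v i ≠ 0. Then, as rational numbers, ∑_{i < n} (b i * u i + δ i * v i)/(a i * u i - σ i * v i) + ∑_{n ≤ i < k} b i / a i = 1/A + ∑_{i < n} v i / (a i * (a i * u i - σ i * v i)). -/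
private lemma aux_frac (A B S C U V : ℚ) (hA : A ≠ 0) (hD : A*U - C*V ≠ 0)
    (h1 : A*S + B*C = 1) :
    (B*U + S*V)/(A*U - C*V) = B/A + V/(A*(A*U - C*V)) := by
  rw [div_add_div _ _ hA (mul_ne_zero hA hD), div_eq_div_iff hD (mul_ne_zero hA (mul_ne_zero hA hD))]
  linear_combination (A*(A*U - C*V)*V) * h1


theorem seifert_fiber_surface_boundary_identity
    (k : ℕ) (hk : 1 ≤ k) (a : Fin k → ℤ) (ha : ∀ i, a i ≠ 0)
    (n : ℕ) (hn : n ≤ k) (b : Fin k → ℤ)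
    (hb : ∑ i, b i * ∏ j ∈ Finset.univ.erase i, a j = 1)
    (u v : Fin k → ℤ)
    (huv : ∀ i : Fin k, (i : ℕ) < n →
      a i * u i - (∏ j ∈ Finset.univ.erase i, a j) * v i ≠ 0) :
    (∑ i ∈ Finset.univ.filter (fun i : Fin k => (i : ℕ) < n),
        ((b i * u i + (∑ j ∈ Finset.univ.erase i,
            b j * ∏ l ∈ (Finset.univ.erase i).erase j, a l) * v i : ℤ) : ℚ)
          / ((a i * u i - (∏ j ∈ Finset.univ.erase i, a j) * v i : ℤ) : ℚ))
      + ∑ i ∈ Finset.univ.filter (fun i : Fin k => n ≤ (i : ℕ)),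
          ((b i : ℤ) : ℚ) / ((a i : ℤ) : ℚ)
    = 1 / ((∏ i, a i : ℤ) : ℚ)
      + ∑ i ∈ Finset.univ.filter (fun i : Fin k => (i : ℕ) < n),
          ((v i : ℤ) : ℚ)
            / ((a i * (a i * u i - (∏ j ∈ Finset.univ.erase i, a j) * v i) : ℤ) : ℚ) := by
  have hA : ∀ i : Fin k, a i * ∏ j ∈ Finset.univ.erase i, a j = ∏ j, a j :=
    fun i => Finset.mul_prod_erase _ _ (Finset.mem_univ i)
  have hAne : (∏ j, a j) ≠ 0 := Finset.prod_ne_zero_iff.mpr fun i _ => ha i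
  -- key algebraic fact: a i * δ i + b i * σ i = 1
  have h1 : ∀ i : Fin k,
      a i * (∑ j ∈ Finset.univ.erase i, b j * ∏ l ∈ (Finset.univ.erase i).erase j, a l)
        + b i * ∏ j ∈ Finset.univ.erase i, a j = 1 := by
    intro i
    rw [Finset.mul_sum]
    have hterm : ∀ j ∈ Finset.univ.erase i,
        a i * (b j * ∏ l ∈ (Finset.univ.erase i).erase j, a l)
          = b j * ∏ l ∈ Finset.univ.erase j, a l := by
      intro j hj
      have hji : j ≠ i := Finset.ne_of_mem_erase hj
      have hre : (Finset.univ.erase i).erase j = (Finset.univ.erase j).erase i :=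
        Finset.erase_right_comm
      have hi : i ∈ Finset.univ.erase j :=
        Finset.mem_erase.mpr ⟨hji.symm, Finset.mem_univ i⟩
      rw [hre, mul_left_comm, Finset.mul_prod_erase _ _ hi]
    rw [Finset.sum_congr rfl hterm, Finset.sum_erase_add _ _ (Finset.mem_univ i)]
    exact hb
  -- per-term identity
  have hterm : ∀ i ∈ Finset.univ.filter (fun i : Fin k => (i : ℕ) < n),
      ((b i * u i + (∑ j ∈ Finset.univ.erase i,
            b j * ∏ l ∈ (Finset.univ.erase i).erase j, a l) * v i : ℤ) : ℚ)
          / ((a i * u i - (∏ j ∈ Finset.univ.erase i, a j) * v i : ℤ) : ℚ)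
        = ((b i : ℤ) : ℚ) / ((a i : ℤ) : ℚ)
          + ((v i : ℤ) : ℚ)
            / ((a i * (a i * u i - (∏ j ∈ Finset.univ.erase i, a j) * v i) : ℤ) : ℚ) := by
    intro i hi
    have hin : (i : ℕ) < n := (Finset.mem_filter.mp hi).2
    have hD : ((a i * u i - (∏ j ∈ Finset.univ.erase i, a j) * v i : ℤ) : ℚ) ≠ 0 := by
      exact_mod_cast huv i hin
    have ha' : ((a i : ℤ) : ℚ) ≠ 0 := by exact_mod_cast ha i
    have h1' : ((a i : ℤ) : ℚ) * ((∑ j ∈ Finset.univ.erase i,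
        b j * ∏ l ∈ (Finset.univ.erase i).erase j, a l : ℤ) : ℚ)
        + ((b i : ℤ) : ℚ) * ((∏ j ∈ Finset.univ.erase i, a j : ℤ) : ℚ) = 1 := by
      exact_mod_cast h1 i
    push_cast at h1' hD ⊢
    exact aux_frac _ _ _ _ _ _ ha' hD h1' 
  rw [Finset.sum_congr rfl hterm, Finset.sum_add_distrib]
  have hfilter : Finset.univ.filter (fun i : Fin k => n ≤ (i : ℕ))
      = Finset.univ.filter (fun i : Fin k => ¬ (i : ℕ) < n) := by
    simp [not_lt]
  have hsum : ∑ i ∈ Finset.univ.filter (fun i : Fin k => (i : ℕ) < n),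
        ((b i : ℤ) : ℚ) / ((a i : ℤ) : ℚ)
      + ∑ i ∈ Finset.univ.filter (fun i : Fin k => n ≤ (i : ℕ)),
        ((b i : ℤ) : ℚ) / ((a i : ℤ) : ℚ)
      = ∑ i, ((b i : ℤ) : ℚ) / ((a i : ℤ) : ℚ) := by
    rw [hfilter, Finset.sum_filter_add_sum_filter_not]
  have hba : ∑ i, ((b i : ℤ) : ℚ) / ((a i : ℤ) : ℚ) = 1 / ((∏ i, a i : ℤ) : ℚ) := by
    have : ∀ i : Fin k, ((b i : ℤ) : ℚ) / ((a i : ℤ) : ℚ)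
        = ((b i * ∏ j ∈ Finset.univ.erase i, a j : ℤ) : ℚ) / ((∏ j, a j : ℤ) : ℚ) := by
      intro i
      rw [← hA i]
      have ha' : ((a i : ℤ) : ℚ) ≠ 0 := by exact_mod_cast ha i
      have hσ : ((∏ j ∈ Finset.univ.erase i, a j : ℤ) : ℚ) ≠ 0 := by
        exact_mod_cast Finset.prod_ne_zero_iff.mpr fun j _ => ha j
      rw [div_eq_div_iff ha' (by exact_mod_cast mul_ne_zero (ha i) (Finset.prod_ne_zero_iff.mpr fun j _ => ha j))]
      push_cast
      ring
    rw [Finset.sum_congr rfl fun i _ => this i, ← Finset.sum_div]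
    congr 1
    exact_mod_cast hb
  rw [add_right_comm, hsum, hba]
end

section
/- Let k ≥ 1, a : Fin k → ℤ with all a i ≠ 0, A = ∏ a i, σ i = ∏_{j ≠ i} a j, and suppose A < 0. Let 1 ≤ n ≤ k and let u i, v i be integers for i < n satisfying a i * u i - σ i * v i > 0 and a i * v i < 0 for all i < n. Then 1/A + ∑_{i < n} v i / (a i * (a i * u i - σ i * v i)) < 0 as a rational number; in particular this expression is nonzero. -/
theorem seifert_negative_component_exists_neg
    (k : ℕ) (hk : 1 ≤ k) (a : Fin k → ℤ) (ha : ∀ i, a i ≠ 0)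
    (hA : ∏ i, a i < 0)
    (n : ℕ) (hn1 : 1 ≤ n) (hn : n ≤ k) (u v : Fin k → ℤ)
    (h1 : ∀ i : Fin k, (i : ℕ) < n →
      0 < a i * u i - (∏ j ∈ Finset.univ.erase i, a j) * v i)
    (h2 : ∀ i : Fin k, (i : ℕ) < n → a i * v i < 0) :
    1 / ((∏ i, a i : ℤ) : ℚ)
      + ∑ i ∈ Finset.univ.filter (fun i : Fin k => (i : ℕ) < n),
          ((v i : ℤ) : ℚ)
            / ((a i * (a i * u i - (∏ j ∈ Finset.univ.erase i, a j) * v i) : ℤ) : ℚ) < 0 ∧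
    (1 / ((∏ i, a i : ℤ) : ℚ)
      + ∑ i ∈ Finset.univ.filter (fun i : Fin k => (i : ℕ) < n),
          ((v i : ℤ) : ℚ)
            / ((a i * (a i * u i - (∏ j ∈ Finset.univ.erase i, a j) * v i) : ℤ) : ℚ)) ≠ 0 := by
  have hA' : ((∏ i, a i : ℤ) : ℚ) < 0 := by exact_mod_cast hA
  have hfirst : 1 / ((∏ i, a i : ℤ) : ℚ) < 0 := div_neg_of_pos_of_neg one_pos hA'
  have hsum : ∑ i ∈ Finset.univ.filter (fun i : Fin k => (i : ℕ) < n),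
      ((v i : ℤ) : ℚ)
        / ((a i * (a i * u i - (∏ j ∈ Finset.univ.erase i, a j) * v i) : ℤ) : ℚ) ≤ 0 := by
    apply Finset.sum_nonpos
    intro i hi
    rw [Finset.mem_filter] at hi
    have hin := hi.2
    set D := a i * u i - (∏ j ∈ Finset.univ.erase i, a j) * v i with hD
    have hDpos : 0 < D := h1 i hin
    have hav : a i * v i < 0 := h2 i hin
    have hane : ((a i : ℤ) : ℚ) ≠ 0 := by exact_mod_cast ha i
    have key : ((v i : ℤ) : ℚ) / ((a i * D : ℤ) : ℚ)
        = ((a i * v i : ℤ) : ℚ) / ((a i * (a i * D) : ℤ) : ℚ) := by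
      push_cast
      rw [mul_div_mul_left _ _ hane]
    rw [key]
    apply le_of_lt
    apply div_neg_of_neg_of_pos
    · exact_mod_cast hav
    · have hpos : (0 : ℤ) < a i * (a i * D) := by
        have h2 : 0 < a i * a i := mul_self_pos.mpr (ha i)
        nlinarith
      exact_mod_cast hpos
  constructor
  · linarith
  · linarith
end
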